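/- Independence of the extension from the choice of dense open set: with X, U, E as above, if g : U → ℝ is bounded and continuous, U₁ ⊂ U is another open dense subset of X, and g₁ = g|_{U₁}, then E(g₁) = E(g) on all of X. -/
import Mathlib


open Filter Topology
open scoped Classical

/-- The canonical extension of a function `g` from a dense open set `U` to `X`:
equal to `g` on `U`, and to `limsup_{y ∈ U, y → x} g(y)` outside `U`. -/
noncomputable def usce {X : Type*} [TopologicalSpace X] (U : Set X) (g : X → ℝ) : X → ℝ :=
  fun x => if x ∈ U then g x else Filter.limsup g (nhdsWithin x U)

section aux

variable {X : Type*} [MetricSpace X] [CompactSpace X]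
    (U U₁ : Set X) (hU : IsOpen U) (hUd : Dense U) (hU₁ : IsOpen U₁) (hU₁d : Dense U₁)
    (hsub : U₁ ⊆ U) (g : X → ℝ) (M : ℝ) (hb : ∀ x ∈ U, |g x| ≤ M)
    (hcont : ContinuousOn g U)

include hU hUd hU₁d hsub hb hcont in
lemma usce_limsup_eq_aux (x : X) :
    Filter.limsup g (nhdsWithin x U₁) = Filter.limsup g (nhdsWithin x U) := by
  have hne1 : ∀ y : X, (nhdsWithin y U₁).NeBot := fun y =>
    mem_closure_iff_nhdsWithin_neBot.mp (hU₁d y)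
  have hbu : ∀ y : X, IsBoundedUnder (· ≤ ·) (nhdsWithin y U) g := fun y =>
    ⟨M, eventually_map.2 (by
      filter_upwards [self_mem_nhdsWithin] with z hz
      exact (abs_le.mp (hb z hz)).2)⟩
  have hbu1 : ∀ y : X, IsBoundedUnder (· ≤ ·) (nhdsWithin y U₁) g := fun y =>
    (hbu y).mono (nhdsWithin_mono y hsub)
  have hbl1 : ∀ y : X, IsBoundedUnder (· ≥ ·) (nhdsWithin y U₁) g := fun y =>
    ⟨-M, eventually_map.2 (by
      filter_upwards [self_mem_nhdsWithin] with z hz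
      exact (abs_le.mp (hb z (hsub hz))).1)⟩
  have hbl : ∀ y : X, IsBoundedUnder (· ≥ ·) (nhdsWithin y U) g := fun y =>
    ⟨-M, eventually_map.2 (by
      filter_upwards [self_mem_nhdsWithin] with z hz
      exact (abs_le.mp (hb z hz)).1)⟩
  haveI hneU : ∀ y : X, (nhdsWithin y U).NeBot := fun y =>
    mem_closure_iff_nhdsWithin_neBot.mp (hUd y)
  haveI := hneU x
  haveI := hne1 x
  refine le_antisymm ?_ ?_
  · exact limsup_le_limsup_of_le (nhdsWithin_mono x hsub)
      ((hbl1 x).isCoboundedUnder_le) (hbu x)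
  · -- limsup over U ≤ limsup over U₁
    set L := Filter.limsup g (nhdsWithin x U₁) with hL
    refine le_of_forall_pos_le_add (fun ε hε => ?_)
    have hev : ∀ᶠ z in nhdsWithin x U₁, g z < L + ε / 2 := by
      refine eventually_lt_of_limsup_lt ?_ (hbu1 x)
      linarith
    rw [eventually_nhdsWithin_iff] at hev
    obtain ⟨W, hW, hWo, hWx⟩ := eventually_nhds_iff.mp hev
    have key : ∀ y ∈ W ∩ U, g y ≤ L + ε / 2 := by
      rintro y ⟨hyW, hyU⟩
      have hca : ContinuousAt g y := (hcont y hyU).continuousAt (hU.mem_nhds hyU)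
      have htend : Filter.Tendsto g (nhdsWithin y U₁) (nhds (g y)) :=
        hca.tendsto.mono_left nhdsWithin_le_nhds
      have hev2 : ∀ᶠ z in nhdsWithin y U₁, g z ≤ L + ε / 2 := by
        have hWnhds : W ∈ nhds y := hWo.mem_nhds hyW
        filter_upwards [self_mem_nhdsWithin,
          mem_nhdsWithin_of_mem_nhds hWnhds] with z hz1 hz2
        exact le_of_lt (hW z hz2 hz1)
      exact le_of_tendsto htend hev2
    have hmem : ∀ᶠ z in nhdsWithin x U, g z ≤ L + ε / 2 := by
      rw [eventually_nhdsWithin_iff]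
      filter_upwards [hWo.mem_nhds hWx] with z hz hzU
      exact key z ⟨hz, hzU⟩
    have := limsup_le_of_le ((hbl x).isCoboundedUnder_le) hmem
    linarith

end aux

/-- Independence of the extension from the choice of dense open set: if `g` is bounded
and continuous on a dense open set `U`, and `U₁ ⊆ U` is another dense open set, then the
extension computed from `U₁` (i.e. from `g|_{U₁}`) agrees with the extension computed
from `U` at every point of `X`. -/
theorem usce_indep_of_dense_open {X : Type*} [MetricSpace X] [CompactSpace X]
    (U U₁ : Set X) (hU : IsOpen U) (hUd : Dense U) (hU₁ : IsOpen U₁) (hU₁d : Dense U₁)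
    (hsub : U₁ ⊆ U) (g : X → ℝ) (M : ℝ) (hb : ∀ x ∈ U, |g x| ≤ M)
    (hcont : ContinuousOn g U) :
    ∀ x, usce U₁ g x = usce U g x := by
  intro x
  by_cases hx1 : x ∈ U₁
  · simp [usce, hx1, hsub hx1]
  · by_cases hx : x ∈ U
    · -- usce U₁ g x = limsup over U₁ = g x = usce U g x
      have hne : (nhdsWithin x U₁).NeBot := mem_closure_iff_nhdsWithin_neBot.mp (hU₁d x)
      have hca : ContinuousAt g x := (hcont x hx).continuousAt (hU.mem_nhds hx)
      have htend : Filter.Tendsto g (nhdsWithin x U₁) (nhds (g x)) :=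
        hca.tendsto.mono_left nhdsWithin_le_nhds
      simp only [usce, hx1, hx, if_true, if_false]
      exact htend.limsup_eq
    · simp only [usce, hx1, hx, if_false]
      exact usce_limsup_eq_aux U U₁ hU hUd hU₁d hsub g M hb hcont x
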